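/- With Σ = (I − A)^{-1} Ω (I − A)^{-T} as the covariance of a linear SCM on a DAG, the entry Σ_{xy} equals the sum over treks (P₁,P₂) from x to y of the product ω_z · (product of edge coefficients along P₁) · (product of edge coefficients along P₂), where z is the common source of the trek (the trek rule). -/
import Mathlib

open Finset

noncomputable def Pw (n : ℕ) (A : Matrix (Fin n) (Fin n) ℝ) (k : ℕ) (x z : Fin n) : ℝ :=
  ∑ f : Fin (k + 1) → Fin n,
    if f 0 = z ∧ f (Fin.last k) = x then ∏ t : Fin k, A (f t.succ) (f t.castSucc) else 0

lemma pow_entry_zero {n : ℕ} (A : Matrix (Fin n) (Fin n) ℝ)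
    (hA : ∀ i j : Fin n, i ≤ j → A i j = 0) :
    ∀ (k : ℕ) (i j : Fin n), (i : ℕ) < (j : ℕ) + k → (A ^ k) i j = 0 := by
  intro k
  induction k with
  | zero =>
    intro i j h
    simp only [pow_zero, Matrix.one_apply]
    rw [if_neg]
    intro hij
    subst hij
    omega
  | succ k ih =>
    intro i j h
    rw [pow_succ, Matrix.mul_apply]
    apply Finset.sum_eq_zero
    intro m _
    by_cases hm : (i : ℕ) < (m : ℕ) + k
    · rw [ih i m hm, zero_mul]
    · have : (m : ℕ) ≤ (j : ℕ) := by omega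
      rw [hA m j (by exact_mod_cast this), mul_zero]

lemma aux_sum_ite_left {n : ℕ} {c : Prop} [Decidable c] (z : Fin n) (u : Fin n → ℝ) :
    (∑ m : Fin n, if m = z ∧ c then u m else 0) = if c then u z else 0 := by
  by_cases hc : c
  · simp [hc]
  · simp [hc]

lemma pow_eq_Pw {n : ℕ} (A : Matrix (Fin n) (Fin n) ℝ) :
    ∀ (k : ℕ) (x z : Fin n), (A ^ k) x z = Pw n A k x z := by
  intro k
  induction k with
  | zero =>
    intro x z
    unfold Pw
    rw [Fintype.sum_equiv (Equiv.funUnique (Fin 1) (Fin n))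
      _ (fun m : Fin n => if m = z ∧ m = x then (1 : ℝ) else 0)
      (fun f => by simp [Fin.last, Equiv.funUnique])]
    rcases eq_or_ne x z with h | h
    · subst h
      simp [Matrix.one_apply]
    · rw [pow_zero, Matrix.one_apply, if_neg h, Eq.comm, Finset.sum_eq_zero]
      intro m _
      rw [if_neg]
      rintro ⟨h1, h2⟩
      exact h (h2 ▸ h1 ▸ rfl)
  | succ k ih =>
    intro x z
    have key : Pw n A (k + 1) x z = ∑ m : Fin n, Pw n A k x m * A m z := by
      unfold Pw
      rw [← (Fin.consEquiv (fun _ : Fin (k + 2) => Fin n)).sum_comp, Fintype.sum_prod_type]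
      have hF : ∀ (m : Fin n) (g : Fin (k + 1) → Fin n),
          (if (Fin.consEquiv (fun _ : Fin (k + 2) => Fin n)) (m, g) 0 = z ∧
              (Fin.consEquiv (fun _ : Fin (k + 2) => Fin n)) (m, g) (Fin.last (k + 1)) = x then
            ∏ t : Fin (k + 1),
              A ((Fin.consEquiv (fun _ : Fin (k + 2) => Fin n)) (m, g) t.succ)
                ((Fin.consEquiv (fun _ : Fin (k + 2) => Fin n)) (m, g) t.castSucc)
          else 0) =
          if m = z ∧ g (Fin.last k) = x then
            A (g 0) m * ∏ t : Fin k, A (g t.succ) (g t.castSucc)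
          else 0 := by
        intro m g
        have hcond : (Fin.consEquiv (fun _ : Fin (k + 2) => Fin n)) (m, g) (Fin.last (k + 1)) =
            g (Fin.last k) := by
          simp only [Fin.consEquiv_apply, ← Fin.succ_last, Fin.cons_succ]
        have hprod : (∏ t : Fin (k + 1),
            A ((Fin.consEquiv (fun _ : Fin (k + 2) => Fin n)) (m, g) t.succ)
              ((Fin.consEquiv (fun _ : Fin (k + 2) => Fin n)) (m, g) t.castSucc)) =
            A (g 0) m * ∏ t : Fin k, A (g t.succ) (g t.castSucc) := by
          simp only [Fin.consEquiv_apply, Fin.prod_univ_succ, Fin.cons_succ,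
            Fin.castSucc_zero, Fin.cons_zero, ← Fin.succ_castSucc]
        simp only [Fin.consEquiv_apply, Fin.cons_zero] at *
        rw [hcond, hprod]
      calc
        ∑ m : Fin n, ∑ g : Fin (k + 1) → Fin n,
            (if (Fin.consEquiv (fun _ : Fin (k + 2) => Fin n)) (m, g) 0 = z ∧
                (Fin.consEquiv (fun _ : Fin (k + 2) => Fin n)) (m, g) (Fin.last (k + 1)) = x then
              ∏ t : Fin (k + 1),
                A ((Fin.consEquiv (fun _ : Fin (k + 2) => Fin n)) (m, g) t.succ)
                  ((Fin.consEquiv (fun _ : Fin (k + 2) => Fin n)) (m, g) t.castSucc)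
            else 0)
            = ∑ m : Fin n, ∑ g : Fin (k + 1) → Fin n,
              (if m = z ∧ g (Fin.last k) = x then
                A (g 0) m * ∏ t : Fin k, A (g t.succ) (g t.castSucc) else 0) := by
              exact Finset.sum_congr rfl fun m _ => Finset.sum_congr rfl fun g _ => hF m g
        _ = ∑ g : Fin (k + 1) → Fin n,
              (if g (Fin.last k) = x then
                A (g 0) z * ∏ t : Fin k, A (g t.succ) (g t.castSucc) else 0) := by
              rw [Finset.sum_comm]
              exact Finset.sum_congr rfl fun g _ => aux_sum_ite_left z _
        _ = ∑ m : Fin n, Pw n A k x m * A m z := by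
              unfold Pw
              symm
              have step1 : ∀ m : Fin n,
                  (∑ f : Fin (k + 1) → Fin n, if f 0 = m ∧ f (Fin.last k) = x then
                    ∏ t : Fin k, A (f t.succ) (f t.castSucc) else 0) * A m z =
                  ∑ f : Fin (k + 1) → Fin n,
                    if m = f 0 ∧ f (Fin.last k) = x then
                      (∏ t : Fin k, A (f t.succ) (f t.castSucc)) * A m z else 0 := by
                intro m
                rw [Finset.sum_mul]
                refine Finset.sum_congr rfl fun f _ => ?_
                by_cases h : f 0 = m ∧ f (Fin.last k) = x
                · rw [if_pos h, if_pos ⟨h.1.symm, h.2⟩]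
                · rw [if_neg h, zero_mul, if_neg (fun hc => h ⟨hc.1.symm, hc.2⟩)]
              rw [Finset.sum_congr rfl fun m _ => step1 m, Finset.sum_comm]
              refine Finset.sum_congr rfl fun f _ => ?_
              rw [aux_sum_ite_left (f 0)]
              by_cases hc : f (Fin.last k) = x
              · rw [if_pos hc, if_pos hc, mul_comm]
              · rw [if_neg hc, if_neg hc]
    rw [key, pow_succ, Matrix.mul_apply]
    exact Finset.sum_congr rfl fun m _ => by rw [ih]

/-- The trek rule: for the covariance `Σ = (I - A)⁻¹ Ω (I - A)⁻ᵀ` of a linear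
SCM on a DAG (coefficient matrix `A` strictly lower triangular, `Ω` diagonal),
the entry `Σ x y` is the sum over treks `(P₁, P₂)` from `x` to `y` — pairs of
directed paths with common source `z`, encoded as vertex sequences ending at
`x` resp. `y` — of `ω_z` times the products of edge coefficients along `P₁`
and `P₂` (sequences that are not actual paths contribute `0`). -/
theorem stmt11 (n : ℕ) (A Om : Matrix (Fin n) (Fin n) ℝ)
    (hA : ∀ i j : Fin n, i ≤ j → A i j = 0)
    (hdiag : Om.IsDiag)
    (S : Matrix (Fin n) (Fin n) ℝ)
    (hS : S = (1 - A)⁻¹ * Om * ((1 - A)⁻¹).transpose) :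
    ∀ x y : Fin n, S x y =
      ∑ z : Fin n, ∑ k ∈ Finset.range n, ∑ l ∈ Finset.range n,
        ∑ f : Fin (k + 1) → Fin n, ∑ g : Fin (l + 1) → Fin n,
          if f 0 = z ∧ g 0 = z ∧ f (Fin.last k) = x ∧ g (Fin.last l) = y then
            Om z z * (∏ t : Fin k, A (f t.succ) (f t.castSucc)) *
              (∏ t : Fin l, A (g t.succ) (g t.castSucc))
          else 0 := by
  intro x y
  have hAn : A ^ n = 0 := by
    ext i j
    rw [pow_entry_zero A hA n i j (by omega)]
    simp
  have hB : (1 - A)⁻¹ = ∑ k ∈ Finset.range n, A ^ k := by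
    apply Matrix.inv_eq_right_inv
    rw [mul_neg_geom_sum, hAn, sub_zero]
  have hSxy : S x y = ∑ z : Fin n, (1 - A)⁻¹ x z * Om z z * (1 - A)⁻¹ y z := by
    rw [hS]
    simp only [Matrix.mul_apply, Matrix.transpose_apply, Finset.sum_mul]
    rw [Finset.sum_comm]
    apply Finset.sum_congr rfl
    intro z _
    rw [Finset.sum_eq_single z]
    · intro w _ hw
      rw [hdiag (Ne.symm hw), mul_zero, zero_mul]
    · intro h
      exact absurd (Finset.mem_univ z) h
  rw [hSxy]
  apply Finset.sum_congr rfl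
  intro z _
  have hBx : ∀ v : Fin n, (1 - A)⁻¹ v z = ∑ k ∈ Finset.range n, Pw n A k v z := by
    intro v
    rw [hB]
    simp only [Matrix.sum_apply]
    exact Finset.sum_congr rfl fun k _ => pow_eq_Pw A k v z
  rw [hBx x, hBx y, Finset.sum_mul, Finset.sum_mul]
  apply Finset.sum_congr rfl
  intro k _
  rw [Finset.mul_sum]
  apply Finset.sum_congr rfl
  intro l _
  unfold Pw
  rw [Finset.sum_mul, Finset.sum_mul]
  apply Finset.sum_congr rfl
  intro f _
  rw [Finset.mul_sum]
  apply Finset.sum_congr rfl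
  intro g _
  by_cases h1 : f 0 = z ∧ f (Fin.last k) = x
  · by_cases h2 : g 0 = z ∧ g (Fin.last l) = y
    · rw [if_pos h1, if_pos h2, if_pos ⟨h1.1, h2.1, h1.2, h2.2⟩]
      ring
    · rw [if_pos h1, if_neg h2, mul_zero, if_neg]
      rintro ⟨-, hg0, -, hgl⟩
      exact h2 ⟨hg0, hgl⟩
  · rw [if_neg h1, zero_mul, zero_mul, if_neg]
    rintro ⟨hf0, -, hfl, -⟩
    exact h1 ⟨hf0, hfl⟩
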